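/- arXiv:1512.04750 — 6 statements merged into one kernel-verified Lean document; each statement's English description precedes it below -/
import Mathlib

section
/- Let W₁, W₂, … be real-valued random variables such that for each n there exists aₙ ∈ ℝ with P(Wₙ = aₙ) ≥ p for some fixed p > 0. If Wₙ converges in distribution to a random variable W, then the law of W has an atom. -/
open MeasureTheory Filter

theorem stmt_4 {Ω : Type*} [MeasurableSpace Ω]
    (P : ProbabilityMeasure Ω) (W : ℕ → Ω → ℝ)
    (hW : ∀ n, AEMeasurable (W n) (P : Measure Ω))
    (a : ℕ → ℝ) (p : ℝ) (hp : 0 < p)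
    (hatom : ∀ n, ENNReal.ofReal p ≤ (P : Measure Ω) {ω | W n ω = a n})
    (μ : ProbabilityMeasure ℝ)
    (hconv : Tendsto (fun n => P.map (hW n)) atTop (nhds μ)) :
    ∃ x : ℝ, 0 < (μ : Measure ℝ) {x} := by
  set ν : ℕ → ProbabilityMeasure ℝ := fun n => P.map (hW n) with hν
  have hp' : (0 : ENNReal) < ENNReal.ofReal p := ENNReal.ofReal_pos.mpr hp
  have hmap : ∀ n, ENNReal.ofReal p ≤ (ν n : Measure ℝ) {a n} := by
    intro n
    have : (ν n : Measure ℝ) {a n} = (P : Measure Ω) {ω | W n ω = a n} := by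
      rw [hν]
      rw [ProbabilityMeasure.toMeasure_map,
        Measure.map_apply_of_aemeasurable (hW n) (measurableSet_singleton _)]
      rfl
    rw [this]; exact hatom n
  -- Step 1: find M with μ(ball 0 M) > 1 - p
  have hunion : Tendsto (fun M : ℕ => (μ : Measure ℝ) (Metric.ball 0 M)) atTop
      (nhds ((μ : Measure ℝ) (⋃ M : ℕ, Metric.ball 0 (M : ℝ)))) := by
    apply tendsto_measure_iUnion_atTop
    intro i j hij x hx
    exact Metric.ball_subset_ball (by exact_mod_cast hij) hx
  have huniv : (⋃ M : ℕ, Metric.ball (0:ℝ) (M : ℝ)) = Set.univ := by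
    ext x; simp only [Set.mem_iUnion, Metric.mem_ball, Set.mem_univ, iff_true]
    obtain ⟨M, hM⟩ := exists_nat_gt (dist x 0)
    exact ⟨M, hM⟩
  rw [huniv, measure_univ] at hunion
  have hlt1 : (1 : ENNReal) - ENNReal.ofReal p < 1 :=
    ENNReal.sub_lt_self ENNReal.one_ne_top one_ne_zero hp'.ne'
  obtain ⟨M, hM⟩ := (hunion.eventually_const_lt hlt1).exists
  -- Step 2: liminf bound on open set
  have hliminf := MeasureTheory.ProbabilityMeasure.le_liminf_measure_open_of_tendsto hconv
    (Metric.isOpen_ball (x := (0:ℝ)) (ε := (M : ℝ)))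
  have hev : ∀ᶠ n in atTop, (1 : ENNReal) - ENNReal.ofReal p <
      (ν n : Measure ℝ) (Metric.ball 0 M) :=
    eventually_lt_of_lt_liminf (lt_of_lt_of_le hM hliminf)
  -- Step 3: eventually a n ∈ closedBall 0 M
  have hmem : ∀ᶠ n in atTop, a n ∈ Metric.closedBall (0:ℝ) M := by
    filter_upwards [hev] with n hn
    by_contra hcon
    have hdisj : Disjoint (Metric.ball (0:ℝ) M) {a n} := by
      rw [Set.disjoint_singleton_right]
      intro h
      exact hcon (Metric.ball_subset_closedBall h)
    have hsum : (ν n : Measure ℝ) (Metric.ball 0 M) + (ν n : Measure ℝ) {a n} ≤ 1 := by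
      rw [← measure_union hdisj (measurableSet_singleton _)]
      exact prob_le_one
    have h1 : (ν n : Measure ℝ) (Metric.ball 0 M) + ENNReal.ofReal p ≤ 1 :=
      le_trans (by gcongr; exact hmap n) hsum
    have h2 : (ν n : Measure ℝ) (Metric.ball 0 M) ≤ 1 - ENNReal.ofReal p :=
      ENNReal.le_sub_of_add_le_right ENNReal.ofReal_ne_top h1
    exact absurd (lt_of_lt_of_le hn h2) (lt_irrefl _)
  obtain ⟨N, hN⟩ := eventually_atTop.mp hmem
  -- Step 4: extract convergent subsequence
  obtain ⟨x, -, φ, hφ, hx⟩ := (isCompact_closedBall (0:ℝ) M).tendsto_subseq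
    (x := fun k => a (k + N)) (fun k => hN (k + N) (Nat.le_add_left N k))
  set ψ : ℕ → ℕ := fun k => φ k + N with hψ
  have hψmono : StrictMono ψ := fun i j hij => by
    simp only [hψ]; exact Nat.add_lt_add_right (hφ hij) N
  have hconv' : Tendsto (fun k => ν (ψ k)) atTop (nhds μ) :=
    hconv.comp hψmono.tendsto_atTop
  have hxlim : Tendsto (fun k => a (ψ k)) atTop (nhds x) := hx
  -- Step 5: μ(closedBall x ε) ≥ p for all ε > 0
  have key : ∀ ε : ℝ, 0 < ε → ENNReal.ofReal p ≤ (μ : Measure ℝ) (Metric.closedBall x ε) := by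
    intro ε hε
    have hcl := MeasureTheory.ProbabilityMeasure.limsup_measure_closed_le_of_tendsto hconv'
      (Metric.isClosed_closedBall (x := x) (ε := ε))
    refine le_trans ?_ hcl
    apply le_limsup_of_frequently_le _ (isBoundedUnder_of ⟨1, fun k => prob_le_one⟩)
    apply Eventually.frequently
    filter_upwards [hxlim (Metric.closedBall_mem_nhds x hε)] with k hk
    calc ENNReal.ofReal p ≤ (ν (ψ k) : Measure ℝ) {a (ψ k)} := hmap _
      _ ≤ (ν (ψ k) : Measure ℝ) (Metric.closedBall x ε) :=
        measure_mono (Set.singleton_subset_iff.mpr hk)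
  -- Step 6: conclude
  refine ⟨x, lt_of_lt_of_le hp' ?_⟩
  have hiInter : (⋂ k : ℕ, Metric.closedBall x (1 / (k + 1))) = {x} := by
    ext y
    simp only [Set.mem_iInter, Metric.mem_closedBall, Set.mem_singleton_iff]
    constructor
    · intro h
      have h0 : dist y x ≤ 0 :=
        ge_of_tendsto' tendsto_one_div_add_atTop_nhds_zero_nat fun k => h k
      rw [← dist_eq_zero]
      exact le_antisymm h0 dist_nonneg
    · intro h; subst h; intro k; simp; positivity
  have htend : Tendsto (fun k : ℕ => (μ : Measure ℝ) (Metric.closedBall x (1 / (k + 1)))) atTop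
      (nhds ((μ : Measure ℝ) (⋂ k : ℕ, Metric.closedBall x (1 / (k + 1))))) := by
    apply tendsto_measure_iInter_atTop
    · intro k; exact Metric.isClosed_closedBall.measurableSet.nullMeasurableSet
    · intro i j hij
      apply Metric.closedBall_subset_closedBall
      apply div_le_div_of_nonneg_left one_pos.le (by positivity)
      exact_mod_cast Nat.add_le_add_right hij 1
    · exact ⟨0, (measure_lt_top _ _).ne⟩
  rw [hiInter] at htend
  exact ge_of_tendsto htend (Filter.Eventually.of_forall fun k => key _ (by positivity))
end

section
/- Let ν(n) denote the n-th record time of an i.i.d. sequence with continuous distribution. Then for all n ≥ 2, E[1/ν(n)] ≤ 3/(4n). -/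
open MeasureTheory ProbabilityTheory
open scoped ENNReal NNReal

namespace Stmt9

/-! ### Real/ENNReal analytic helpers -/

lemma sum_telescope_le {l : ℕ} (t h : ℕ → ℝ)
    (ht0 : ∀ j, l < j → 0 ≤ t j)
    (hth : ∀ j, l < j → t j ≤ h (j - 1) - h j)
    (hh0 : ∀ m, l ≤ m → 0 ≤ h m)
    (F : Finset ℕ) (hF : ∀ j ∈ F, l < j) :
    ∑ j ∈ F, t j ≤ h l := by
  have key : ∀ J, l ≤ J → ∑ j ∈ Finset.Icc (l+1) J, t j ≤ h l - h J := by
    intro J hJ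
    induction J, hJ using Nat.le_induction with
    | base => simp [Finset.Icc_eq_empty_of_lt (Nat.lt_succ_self l)]
    | succ J hJ ih =>
      rw [Finset.sum_Icc_succ_top (by omega : l + 1 ≤ J + 1)]
      have h1 := hth (J+1) (by omega)
      have h2 : (J+1) - 1 = J := by omega
      rw [h2] at h1
      linarith
  rcases F.eq_empty_or_nonempty with rfl | hne
  · simpa using hh0 l le_rfl
  · set J := F.max' hne with hJdef
    have hJl : l < J := hF _ (F.max'_mem hne)
    calc ∑ j ∈ F, t j
        ≤ ∑ j ∈ Finset.Icc (l+1) J, t j := by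
          refine Finset.sum_le_sum_of_subset_of_nonneg
            (fun j hj => Finset.mem_Icc.mpr ⟨hF j hj, F.le_max' j hj⟩)
            (fun j hj _ => ht0 j ?_)
          rw [Finset.mem_Icc] at hj; omega
      _ ≤ h l - h J := key J hJl.le
      _ ≤ h l := by have := hh0 J hJl.le; linarith

lemma tsum_ite_le {l : ℕ} (t h : ℕ → ℝ)
    (ht0 : ∀ j, l < j → 0 ≤ t j)
    (hth : ∀ j, l < j → t j ≤ h (j - 1) - h j)
    (hh0 : ∀ m, l ≤ m → 0 ≤ h m) :
    (∑' j : ℕ, if l < j then ENNReal.ofReal (t j) else 0) ≤ ENNReal.ofReal (h l) := by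
  refine Summable.tsum_le_of_sum_le ENNReal.summable fun F => ?_
  classical
  have : ∑ j ∈ F, (if l < j then ENNReal.ofReal (t j) else 0)
      = ∑ j ∈ F.filter (fun j => l < j), ENNReal.ofReal (t j) := by
    rw [Finset.sum_filter]
  rw [this, ← ENNReal.ofReal_sum_of_nonneg (fun j hj => ht0 j (Finset.mem_filter.mp hj).2)]
  exact ENNReal.ofReal_le_ofReal
    (sum_telescope_le t h ht0 hth hh0 _ (fun j hj => (Finset.mem_filter.mp hj).2))

lemma cast_pred (j : ℕ) (hj : 1 ≤ j) : ((j - 1 : ℕ) : ℝ) = (j:ℝ) - 1 := by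
  push_cast [hj]; ring

lemma K1 {l : ℕ} (hl : 1 ≤ l) :
    (∑' j : ℕ, if l < j then
        ENNReal.ofReal (((j:ℝ))⁻¹ * ((l:ℝ)/(((j:ℝ)-1)*j))) else 0)
      ≤ ENNReal.ofReal (3/4) * ENNReal.ofReal (((l:ℝ)+1)⁻¹) := by
  rw [← ENNReal.ofReal_mul (by norm_num)]
  have hl1 : (1:ℝ) ≤ (l:ℝ) := by exact_mod_cast hl
  refine le_trans
    (tsum_ite_le (fun j => ((j:ℝ))⁻¹ * ((l:ℝ)/(((j:ℝ)-1)*j)))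
      (fun m => 3*(l:ℝ)/(4*((m:ℝ)*((m:ℝ)+1)))) ?_ ?_ ?_) ?_
  · intro j hj
    have hj2 : (2:ℝ) ≤ (j:ℝ) := by exact_mod_cast (by omega : 2 ≤ j)
    have : (0:ℝ) < (j:ℝ) - 1 := by linarith
    have : (0:ℝ) < (j:ℝ) := by linarith
    positivity
  · intro j hj
    have hj2 : (2:ℝ) ≤ (j:ℝ) := by exact_mod_cast (by omega : 2 ≤ j)
    rw [cast_pred j (by omega)]
    have h1 : (0:ℝ) < (j:ℝ) - 1 := by linarith
    have h2 : (0:ℝ) < (j:ℝ) := by linarith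
    have h3 : (0:ℝ) < (j:ℝ) + 1 := by linarith
    rw [← sub_nonneg]
    have e : 3*(l:ℝ)/(4*(((j:ℝ)-1)*(((j:ℝ)-1)+1))) - 3*(l:ℝ)/(4*((j:ℝ)*((j:ℝ)+1)))
        - ((j:ℝ))⁻¹ * ((l:ℝ)/(((j:ℝ)-1)*(j:ℝ)))
        = ((l:ℝ)*((j:ℝ)-2)) / (2*((j:ℝ)-1)*(j:ℝ)^2*((j:ℝ)+1)) := by
      field_simp
      ring
    rw [e]
    have : (0:ℝ) ≤ (j:ℝ) - 2 := by linarith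
    positivity
  · intro m hm
    have : (1:ℝ) ≤ (m:ℝ) := le_trans hl1 (by exact_mod_cast hm)
    positivity
  · apply ENNReal.ofReal_le_ofReal
    have h0 : (0:ℝ) < (l:ℝ) := by linarith
    apply le_of_eq
    field_simp

lemma K2 {l : ℕ} (hl : 1 ≤ l) :
    (∑' j : ℕ, if l < j then
        ENNReal.ofReal ((((j:ℝ))+1)⁻¹ * ((l:ℝ)/(((j:ℝ)-1)*j))) else 0)
      ≤ ENNReal.ofReal (1/2) * ENNReal.ofReal (((l:ℝ)+1)⁻¹) := by
  rw [← ENNReal.ofReal_mul (by norm_num)]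
  have hl1 : (1:ℝ) ≤ (l:ℝ) := by exact_mod_cast hl
  refine le_trans
    (tsum_ite_le (fun j => (((j:ℝ))+1)⁻¹ * ((l:ℝ)/(((j:ℝ)-1)*j)))
      (fun m => (l:ℝ)/(2*((m:ℝ)*((m:ℝ)+1)))) ?_ ?_ ?_) ?_
  · intro j hj
    have hj2 : (2:ℝ) ≤ (j:ℝ) := by exact_mod_cast (by omega : 2 ≤ j)
    have : (0:ℝ) < (j:ℝ) - 1 := by linarith
    have : (0:ℝ) < (j:ℝ) := by linarith
    positivity
  · intro j hj
    have hj2 : (2:ℝ) ≤ (j:ℝ) := by exact_mod_cast (by omega : 2 ≤ j)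
    rw [cast_pred j (by omega)]
    have h1 : (0:ℝ) < (j:ℝ) - 1 := by linarith
    have h2 : (0:ℝ) < (j:ℝ) := by linarith
    have h3 : (0:ℝ) < (j:ℝ) + 1 := by linarith
    rw [← sub_nonneg]
    have e : (l:ℝ)/(2*(((j:ℝ)-1)*(((j:ℝ)-1)+1))) - (l:ℝ)/(2*((j:ℝ)*((j:ℝ)+1)))
        - (((j:ℝ))+1)⁻¹ * ((l:ℝ)/(((j:ℝ)-1)*(j:ℝ))) = 0 := by
      field_simp
      ring
    rw [e]
  · intro m hm
    have : (1:ℝ) ≤ (m:ℝ) := le_trans hl1 (by exact_mod_cast hm)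
    positivity
  · apply ENNReal.ofReal_le_ofReal
    have h0 : (0:ℝ) < (l:ℝ) := by linarith
    apply le_of_eq
    field_simp

lemma prod_ratio {l : ℕ} (hl : 1 ≤ l) : ∀ j, l < j →
    ∏ i ∈ Finset.Ioo l j, (((i:ℝ)-1)/i) = (l:ℝ)/((j:ℝ)-1) := by
  intro j hj
  induction j, hj using Nat.le_induction with
  | base =>
    have : Finset.Ioo l (l+1) = ∅ := by
      apply Finset.eq_empty_of_forall_notMem
      intro x hx
      rw [Finset.mem_Ioo] at hx
      omega
    rw [this]
    have hl0 : ((l:ℝ)) ≠ 0 := by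
      have : (1:ℝ) ≤ (l:ℝ) := by exact_mod_cast hl
      linarith
    simp [hl0]
  | succ j hj ih =>
    have hIoo : Finset.Ioo l (j+1) = insert j (Finset.Ioo l j) := by
      apply Finset.ext
      intro x
      simp only [Finset.mem_Ioo, Finset.mem_insert]
      omega
    rw [hIoo, Finset.prod_insert (by simp), ih]
    have h1 : ((j:ℝ)) - 1 ≠ 0 := by
      have : (2:ℝ) ≤ (j:ℝ) := by exact_mod_cast (by omega : 2 ≤ j)
      linarith
    have h2 : ((j:ℝ)) ≠ 0 := by
      have : (2:ℝ) ≤ (j:ℝ) := by exact_mod_cast (by omega : 2 ≤ j)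
      linarith
    have hc : ((j + 1 : ℕ) : ℝ) - 1 = (j:ℝ) := by push_cast; ring
    rw [hc]
    field_simp

/-! ### Pointwise facts about the record-time process -/

variable {Ω : Type*} (ξ : ℕ → Ω → ℕ) (ν : ℕ → Ω → ℕ)

local notation "S " j:max ω:max => ∑ i ∈ Finset.Icc 1 j, ξ i ω

lemma S_mono (ω : Ω) {j j' : ℕ} (h : j ≤ j') : S j ω ≤ S j' ω :=
  Finset.sum_le_sum_of_subset (Finset.Icc_subset_Icc_right h)

lemma S_le (hval : ∀ i ω, ξ i ω ≤ 1) (ω : Ω) (j : ℕ) : S j ω ≤ j := by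
  calc ∑ i ∈ Finset.Icc 1 j, ξ i ω ≤ ∑ i ∈ Finset.Icc 1 j, 1 :=
        Finset.sum_le_sum fun i _ => hval i ω
    _ = j := by simp [Nat.card_Icc]

lemma S_succ (ω : Ω) (j : ℕ) : S (j+1) ω = S j ω + ξ (j+1) ω :=
  Finset.sum_Icc_succ_top (by omega) _

variable (hν : ∀ k ω, ν k ω = sInf {j : ℕ | 1 ≤ j ∧ ∑ i ∈ Finset.Icc 1 j, ξ i ω = k})

section
include hν

lemma nu_spec {n l : ℕ} {ω : Ω} (h : ν n ω = l) (hl : l ≠ 0) :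
    1 ≤ l ∧ S l ω = n ∧ ∀ j, 1 ≤ j → j < l → S j ω ≠ n := by
  have hne : {j : ℕ | 1 ≤ j ∧ S j ω = n}.Nonempty := by
    by_contra hemp
    rw [Set.not_nonempty_iff_eq_empty] at hemp
    rw [hν] at h
    rw [hemp] at h
    simp [Nat.sInf_empty] at h
    exact hl h.symm
  have hmem := Nat.sInf_mem hne
  rw [← hν n ω] at hmem
  rw [h] at hmem
  refine ⟨hmem.1, hmem.2, fun j hj1 hjl hSj => ?_⟩
  have : sInf {j : ℕ | 1 ≤ j ∧ S j ω = n} ≤ j := Nat.sInf_le ⟨hj1, hSj⟩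
  rw [← hν n ω, h] at this
  omega

lemma nu_eq_of {n l : ℕ} {ω : Ω} (hl : 1 ≤ l) (hS : S l ω = n)
    (hmin : ∀ j, 1 ≤ j → j < l → S j ω ≠ n) : ν n ω = l := by
  rw [hν]
  refine le_antisymm (Nat.sInf_le ?_) ?_
  · exact ⟨hl, hS⟩
  by_contra hlt
  push_neg at hlt
  have hne : {j : ℕ | 1 ≤ j ∧ S j ω = n}.Nonempty := ⟨l, hl, hS⟩
  have hmem := Nat.sInf_mem hne
  exact hmin _ hmem.1 (by omega) hmem.2

lemma nu_ge (hval : ∀ i ω, ξ i ω ≤ 1) {n : ℕ} {ω : Ω} (h : ν n ω ≠ 0) : n ≤ ν n ω := by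
  obtain ⟨h1, h2, _⟩ := nu_spec ξ ν hν rfl h
  calc n = S (ν n ω) ω := h2.symm
    _ ≤ ν n ω := S_le ξ hval ω _

lemma nu_succ_iff (hval : ∀ i ω, ξ i ω ≤ 1) {n j : ℕ} (hn : 1 ≤ n) (hj : j ≠ 0) (ω : Ω) :
    ν (n+1) ω = j ↔ ∃ l, 1 ≤ l ∧ l < j ∧ ν n ω = l ∧
      (∀ i, l < i → i < j → ξ i ω = 0) ∧ ξ j ω = 1 := by
  constructor
  · intro h
    obtain ⟨hj1, hSj, hminj⟩ := nu_spec ξ ν hν h hj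
    have hj2 : 2 ≤ j := by
      have := S_le ξ hval ω j
      omega
    obtain ⟨j', rfl⟩ : ∃ j', j = j' + 1 := ⟨j - 1, by omega⟩
    have hstep : S (j'+1) ω = S j' ω + ξ (j'+1) ω := S_succ ξ ω j'
    have hxle := hval (j'+1) ω
    have hj'1 : 1 ≤ j' := by omega
    have hSj' : S j' ω = n := by
      have hne := hminj j' hj'1 (by omega)
      omega
    have hξ : ξ (j'+1) ω = 1 := by omega
    set l := ν n ω with hldef
    have hlspec : ν n ω = l := rfl
    have hlne : l ≠ 0 := by
      intro h0
      have h0' : sInf {i : ℕ | 1 ≤ i ∧ S i ω = n} = 0 := by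
        rw [← hν n ω]; omega
      have hne : {i : ℕ | 1 ≤ i ∧ S i ω = n}.Nonempty := ⟨j', hj'1, hSj'⟩
      have hmem := Nat.sInf_mem hne
      rw [h0'] at hmem
      exact absurd hmem.1 (by omega)
    obtain ⟨hl1, hSl, hminl⟩ := nu_spec ξ ν hν hlspec hlne
    have hlj' : l ≤ j' := by
      by_contra hgt
      exact hminl j' hj'1 (by omega) hSj'
    refine ⟨l, hl1, by omega, rfl, fun i hli hij => ?_, hξ⟩
    have hi1 : 1 ≤ i := by omega
    obtain ⟨i', rfl⟩ : ∃ i', i = i' + 1 := ⟨i - 1, by omega⟩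
    have hSi : S (i'+1) ω = n := by
      have h1 : S (i'+1) ω ≤ S j' ω := S_mono ξ ω (by omega)
      have h2 : S l ω ≤ S (i'+1) ω := S_mono ξ ω (by omega)
      omega
    have hSi' : S i' ω = n := by
      have h1 : S i' ω ≤ S (i'+1) ω := S_mono ξ ω (by omega)
      have h2 : S l ω ≤ S i' ω := S_mono ξ ω (by omega)
      omega
    have := S_succ ξ ω i'
    omega
  · rintro ⟨l, hl1, hlj, hνl, hzero, hone⟩
    obtain ⟨hl1', hSl, hminl⟩ := nu_spec ξ ν hν hνl (by omega)
    have hconst : ∀ i, l ≤ i → i < j → S i ω = n := by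
      intro i hli hij
      induction i, hli using Nat.le_induction with
      | base => exact hSl
      | succ i hi ih =>
        have hSi : S i ω = n := ih (by omega)
        have := S_succ ξ ω i
        have := hzero (i+1) (by omega) hij
        omega
    obtain ⟨j', rfl⟩ : ∃ j', j = j' + 1 := ⟨j - 1, by omega⟩
    have hSj' : S j' ω = n := hconst j' (by omega) (by omega)
    have hSj : S (j'+1) ω = n + 1 := by
      have := S_succ ξ ω j'
      omega
    apply nu_eq_of ξ ν hν (by omega) hSj
    intro i hi1 hij
    have : S i ω ≤ S j' ω := S_mono ξ ω (by omega)
    omega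

end

noncomputable def fw : ℕ → ℝ≥0∞ := fun j => ENNReal.ofReal (((j:ℝ))⁻¹)

noncomputable def gw : ℕ → ℝ≥0∞ := fun l => if 1 ≤ l then ENNReal.ofReal (((l:ℝ)+1)⁻¹) else 0

end Stmt9

theorem stmt_9 {Ω : Type*} [MeasurableSpace Ω]
    (P : Measure Ω) [IsProbabilityMeasure P]
    (ξ : ℕ → Ω → ℕ) (hmeas : ∀ i, Measurable (ξ i))
    (hindep : iIndepFun ξ P)
    (hval : ∀ i ω, ξ i ω ≤ 1)
    (hdist : ∀ i : ℕ, 1 ≤ i → P {ω | ξ i ω = 1} = ENNReal.ofReal (1 / (i : ℝ)))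
    (ν : ℕ → Ω → ℕ)
    (hν : ∀ k ω, ν k ω = sInf {j : ℕ | 1 ≤ j ∧ ∑ i ∈ Finset.Icc 1 j, ξ i ω = k})
    (n : ℕ) (hn : 2 ≤ n) :
    ∫ ω, ((ν n ω : ℝ))⁻¹ ∂P ≤ 3 / (4 * n) := by
  classical
  have hSmeas : ∀ j : ℕ, Measurable (fun ω => ∑ i ∈ Finset.Icc 1 j, ξ i ω) :=
    fun j => Finset.measurable_sum _ (fun i _ => hmeas i)
  have hνset : ∀ m l : ℕ, MeasurableSet {ω | ν m ω = l} := by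
    intro m l
    rcases Nat.eq_zero_or_pos l with rfl | hl
    · have hrw : {ω | ν m ω = 0}
          = ⋂ (j : ℕ), ⋂ (_ : 1 ≤ j), ((fun ω => ∑ i ∈ Finset.Icc 1 j, ξ i ω) ⁻¹' {m})ᶜ := by
        ext ω
        simp only [Set.mem_setOf_eq, Set.mem_iInter, Set.mem_compl_iff, Set.mem_preimage,
          Set.mem_singleton_iff]
        rw [hν, Nat.sInf_eq_zero]
        constructor
        · rintro (⟨h0, _⟩ | hemp)
          · omega
          · intro j hj hS
            exact Set.eq_empty_iff_forall_notMem.mp hemp j ⟨hj, hS⟩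
        · intro hall
          right
          apply Set.eq_empty_iff_forall_notMem.mpr
          rintro j ⟨hj, hS⟩
          exact hall j hj hS
      rw [hrw]
      exact MeasurableSet.iInter fun j => MeasurableSet.iInter fun _ =>
        ((hSmeas j) (measurableSet_singleton m)).compl
    · have hrw : {ω | ν m ω = l}
          = ((fun ω => ∑ i ∈ Finset.Icc 1 l, ξ i ω) ⁻¹' {m}) ∩
            ⋂ (j : ℕ), ⋂ (_ : 1 ≤ j), ⋂ (_ : j < l),
              ((fun ω => ∑ i ∈ Finset.Icc 1 j, ξ i ω) ⁻¹' {m})ᶜ := by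
        ext ω
        simp only [Set.mem_setOf_eq, Set.mem_inter_iff, Set.mem_iInter, Set.mem_compl_iff,
          Set.mem_preimage, Set.mem_singleton_iff]
        constructor
        · intro h
          obtain ⟨h1, h2, h3⟩ := Stmt9.nu_spec ξ ν hν h (by omega)
          exact ⟨h2, h3⟩
        · rintro ⟨hS, hmin⟩
          exact Stmt9.nu_eq_of ξ ν hν hl hS hmin
      rw [hrw]
      exact ((hSmeas l) (measurableSet_singleton m)).inter
        (MeasurableSet.iInter fun j => MeasurableSet.iInter fun _ => MeasurableSet.iInter fun _ =>
          ((hSmeas j) (measurableSet_singleton m)).compl)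
  have hνmeas : ∀ m : ℕ, Measurable (ν m) := fun m => measurable_to_countable' (hνset m)
  have hEXP : ∀ (m : ℕ) (φ : ℕ → ℝ≥0∞),
      ∫⁻ ω, φ (ν m ω) ∂P = ∑' j : ℕ, φ j * P {ω | ν m ω = j} := by
    intro m φ
    have hpt : (fun ω => φ (ν m ω))
        = fun ω => ∑' j : ℕ, Set.indicator {ω' | ν m ω' = j} (fun _ => φ j) ω := by
      funext ω
      rw [eq_comm, tsum_eq_single (ν m ω)]
      · simp [Set.indicator_apply]
      · intro b hb
        simp only [Set.indicator_apply, Set.mem_setOf_eq]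
        rw [if_neg (fun h => hb h.symm)]
    rw [hpt, lintegral_tsum (fun j => (measurable_const.indicator (hνset m j)).aemeasurable)]
    exact tsum_congr fun j => by
      rw [lintegral_indicator_const (hνset m j), mul_comm]
  have hmeasB : ∀ l j : ℕ, 1 ≤ l → l < j →
      P {ω | (∀ i, l < i → i < j → ξ i ω = 0) ∧ ξ j ω = 1}
        = ENNReal.ofReal ((l:ℝ)/(((j:ℝ)-1)*j)) := by
    intro l j hl hlj
    have hset : {ω | (∀ i, l < i → i < j → ξ i ω = 0) ∧ ξ j ω = 1}
        = ⋂ i ∈ Finset.Ioc l j, ξ i ⁻¹' (if i = j then ({1} : Set ℕ) else {0}) := by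
      ext ω
      simp only [Set.mem_setOf_eq, Set.mem_iInter, Set.mem_preimage, Finset.mem_Ioc]
      constructor
      · rintro ⟨hz, ho⟩ i hi
        by_cases hij : i = j
        · subst hij; simp [ho]
        · have := hz i hi.1 (by omega)
          simp [hij, this]
      · intro hall
        constructor
        · intro i hli hij
          have := hall i ⟨hli, by omega⟩
          rw [if_neg (by omega)] at this
          simpa using this
        · have := hall j ⟨hlj, le_rfl⟩
          rw [if_pos rfl] at this
          simpa using this
    rw [hset, hindep.measure_inter_preimage_eq_mul (Finset.Ioc l j)
      (fun i _ => MeasurableSet.of_discrete)]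
    have hfac : ∀ i ∈ Finset.Ioc l j,
        P (ξ i ⁻¹' (if i = j then ({1} : Set ℕ) else {0}))
          = ENNReal.ofReal (if i = j then 1/(j:ℝ) else ((i:ℝ)-1)/i) := by
      intro i hi
      rw [Finset.mem_Ioc] at hi
      by_cases hij : i = j
      · subst hij
        rw [if_pos rfl, if_pos rfl]
        exact hdist i (by omega)
      · rw [if_neg hij, if_neg hij]
        have hi2 : 2 ≤ i := by omega
        have hcompl : ξ i ⁻¹' ({0} : Set ℕ) = (ξ i ⁻¹' ({1} : Set ℕ))ᶜ := by
          ext ω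
          simp only [Set.mem_preimage, Set.mem_singleton_iff, Set.mem_compl_iff]
          have := hval i ω
          omega
        have hd1 : P (ξ i ⁻¹' ({1} : Set ℕ)) = ENNReal.ofReal (1/(i:ℝ)) := hdist i (by omega)
        rw [hcompl, measure_compl (hmeas i (measurableSet_singleton 1)) (measure_ne_top _ _),
          measure_univ, hd1]
        have hi0 : (0:ℝ) < (i:ℝ) := by
          have : (2:ℝ) ≤ (i:ℝ) := by exact_mod_cast hi2
          linarith
        have h1 : ((i:ℝ)-1)/i = 1 - 1/i := by field_simp
        rw [h1, ENNReal.ofReal_sub _ (by positivity), ENNReal.ofReal_one]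
    have hnn : ∀ i ∈ Finset.Ioc l j, 0 ≤ (if i = j then 1/(j:ℝ) else ((i:ℝ)-1)/i) := by
      intro i hi
      rw [Finset.mem_Ioc] at hi
      by_cases hij : i = j
      · rw [if_pos hij]; positivity
      · rw [if_neg hij]
        have : (1:ℝ) ≤ (i:ℝ) := by exact_mod_cast (by omega : 1 ≤ i)
        apply div_nonneg (by linarith) (by linarith)
    rw [Finset.prod_congr rfl hfac, ← ENNReal.ofReal_prod_of_nonneg hnn]
    congr 1
    have hIoc : Finset.Ioc l j = insert j (Finset.Ioo l j) := (Finset.Ioo_insert_right hlj).symm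
    rw [hIoc, Finset.prod_insert (by simp), if_pos rfl,
      Finset.prod_congr rfl (fun i hi => if_neg (by rw [Finset.mem_Ioo] at hi; omega)),
      Stmt9.prod_ratio hl j hlj]
    rw [div_mul_div_comm, one_mul, mul_comm ((j:ℝ)) (((j:ℝ))-1)]
  have hsplit : ∀ (m l j : ℕ), 1 ≤ l → l < j →
      P ({ω | ν m ω = l} ∩ {ω | (∀ i, l < i → i < j → ξ i ω = 0) ∧ ξ j ω = 1})
        = P {ω | ν m ω = l} * P {ω | (∀ i, l < i → i < j → ξ i ω = 0) ∧ ξ j ω = 1} := by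
    intro m l j hl hlj
    have hdisj : Disjoint (Finset.Icc 1 l) (Finset.Ioc l j) := by
      rw [Finset.disjoint_left]
      intro a ha ha'
      rw [Finset.mem_Icc] at ha
      rw [Finset.mem_Ioc] at ha'
      omega
    have hIF := hindep.indepFun_finset (Finset.Icc 1 l) (Finset.Ioc l j) hdisj hmeas
    set A : Set ((Finset.Icc 1 l : Finset ℕ) → ℕ) :=
      {v | (∑ i ∈ Finset.Icc 1 l, (if h : i ∈ Finset.Icc 1 l then v ⟨i, h⟩ else 0)) = m
        ∧ ∀ k, 1 ≤ k → k < l →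
          (∑ i ∈ Finset.Icc 1 k, (if h : i ∈ Finset.Icc 1 l then v ⟨i, h⟩ else 0)) ≠ m} with hA
    set B : Set (↥(Finset.Ioc l j) → ℕ) :=
      {v | ∀ i : ↥(Finset.Ioc l j), v i = if (i:ℕ) = j then 1 else 0} with hB
    have hXA : {ω | ν m ω = l} = (fun ω (i : (Finset.Icc 1 l : Finset ℕ)) => ξ i ω) ⁻¹' A := by
      ext ω
      have hsum : ∀ k, k ≤ l →
          (∑ i ∈ Finset.Icc 1 k, (if h : i ∈ Finset.Icc 1 l then
            (fun (i : (Finset.Icc 1 l : Finset ℕ)) => ξ i ω) ⟨i, h⟩ else 0))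
          = ∑ i ∈ Finset.Icc 1 k, ξ i ω := by
        intro k hk
        apply Finset.sum_congr rfl
        intro i hi
        rw [Finset.mem_Icc] at hi
        rw [dif_pos (by rw [Finset.mem_Icc]; omega)]
      simp only [Set.mem_setOf_eq, Set.mem_preimage, hA]
      constructor
      · intro h
        obtain ⟨h1, h2, h3⟩ := Stmt9.nu_spec ξ ν hν h (by omega)
        refine ⟨?_, ?_⟩
        · rw [hsum l le_rfl]; exact h2
        · intro k hk1 hkl
          rw [hsum k (by omega)]
          exact h3 k hk1 hkl
      · rintro ⟨h1, h2⟩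
        apply Stmt9.nu_eq_of ξ ν hν hl
        · rw [← hsum l le_rfl]; exact h1
        · intro k hk1 hkl
          rw [← hsum k (by omega)]
          exact h2 k hk1 hkl
    have hYB : {ω | (∀ i, l < i → i < j → ξ i ω = 0) ∧ ξ j ω = 1}
        = (fun ω (i : (Finset.Ioc l j : Finset ℕ)) => ξ i ω) ⁻¹' B := by
      ext ω
      simp only [Set.mem_setOf_eq, Set.mem_preimage, hB, Subtype.forall]
      constructor
      · rintro ⟨hz, ho⟩ i hi
        rw [Finset.mem_Ioc] at hi
        by_cases hij : i = j
        · subst hij; simpa using ho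
        · rw [if_neg hij]
          exact hz i hi.1 (by omega)
      · intro hall
        constructor
        · intro i hli hij
          have := hall i (by rw [Finset.mem_Ioc]; omega)
          rw [if_neg (by omega)] at this
          exact this
        · have := hall j (by rw [Finset.mem_Ioc]; omega)
          rw [if_pos rfl] at this
          exact this
    rw [hXA, hYB]
    exact hIF.measure_inter_preimage_eq_mul A B MeasurableSet.of_discrete MeasurableSet.of_discrete
  have hPdecomp : ∀ (m j : ℕ), 1 ≤ m → 1 ≤ j →
      P {ω | ν (m+1) ω = j}
        = ∑ l ∈ Finset.Ico 1 j,
            P {ω | ν m ω = l} * ENNReal.ofReal ((l:ℝ)/(((j:ℝ)-1)*j)) := by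
    intro m j hm hj
    have hunion : {ω | ν (m+1) ω = j}
        = ⋃ l ∈ Finset.Ico 1 j, ({ω | ν m ω = l} ∩
            {ω | (∀ i, l < i → i < j → ξ i ω = 0) ∧ ξ j ω = 1}) := by
      ext ω
      simp only [Set.mem_setOf_eq, Set.mem_iUnion, Set.mem_inter_iff, Finset.mem_Ico]
      rw [Stmt9.nu_succ_iff ξ ν hν hval hm (by omega) ω]
      constructor
      · rintro ⟨l, h1, h2, h3, h4, h5⟩; exact ⟨l, ⟨h1, h2⟩, h3, h4, h5⟩
      · rintro ⟨l, ⟨h1, h2⟩, h3, h4, h5⟩; exact ⟨l, h1, h2, h3, h4, h5⟩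
    have hBmeas : ∀ l : ℕ, MeasurableSet {ω | (∀ i, l < i → i < j → ξ i ω = 0) ∧ ξ j ω = 1} := by
      intro l
      have hrw : {ω | (∀ i, l < i → i < j → ξ i ω = 0) ∧ ξ j ω = 1}
          = (⋂ (i : ℕ) (_ : l < i) (_ : i < j), ξ i ⁻¹' {0}) ∩ ξ j ⁻¹' {1} := by
        ext ω
        simp [Set.mem_iInter]
      rw [hrw]
      exact (MeasurableSet.iInter fun i => MeasurableSet.iInter fun _ =>
        MeasurableSet.iInter fun _ => hmeas i (measurableSet_singleton 0)).inter
        (hmeas j (measurableSet_singleton 1))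
    rw [hunion, measure_biUnion_finset ?_ (fun l _ => (hνset m l).inter (hBmeas l))]
    · apply Finset.sum_congr rfl
      intro l hl
      rw [Finset.mem_Ico] at hl
      rw [hsplit m l j hl.1 (by omega), hmeasB l j hl.1 (by omega)]
    · intro l hl l' hl' hne
      apply Set.disjoint_left.mpr
      rintro ω ⟨h1, _⟩ ⟨h2, _⟩
      exact hne (h1 ▸ h2 ▸ rfl)
  have hpair : ∀ m : ℕ, Pairwise (Function.onFun Disjoint (fun l => {ω | ν m ω = l})) := by
    intro m l l' hne
    apply Set.disjoint_left.mpr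
    rintro ω h1 h2
    exact hne ((h1.symm.trans h2))
  have hrec : ∀ (m : ℕ), 1 ≤ m → ∀ (φ : ℕ → ℝ≥0∞), φ 0 = 0 → ∀ (C : ℝ≥0∞),
      (∀ l : ℕ, 1 ≤ l →
        (∑' j : ℕ, if l < j then φ j * ENNReal.ofReal ((l:ℝ)/(((j:ℝ)-1)*j)) else 0)
          ≤ C * ENNReal.ofReal (((l:ℝ)+1)⁻¹)) →
      ∫⁻ ω, φ (ν (m+1) ω) ∂P ≤ C * ∑' l : ℕ, Stmt9.gw l * P {ω | ν m ω = l} := by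
    intro m hm φ hφ0 C hK
    rw [hEXP]
    have hperj : ∀ j : ℕ, φ j * P {ω | ν (m+1) ω = j}
        = ∑' l : ℕ, (if 1 ≤ l ∧ l < j then
            P {ω | ν m ω = l} * (φ j * ENNReal.ofReal ((l:ℝ)/(((j:ℝ)-1)*j))) else 0) := by
      intro j
      rcases Nat.eq_zero_or_pos j with rfl | hj
      · simp [hφ0]
      · rw [hPdecomp m j hm hj, Finset.mul_sum,
          tsum_eq_sum (s := Finset.Ico 1 j)
            (fun l hl => if_neg (by rw [Finset.mem_Ico] at hl; exact hl))]
        apply Finset.sum_congr rfl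
        intro l hl
        rw [Finset.mem_Ico] at hl
        rw [if_pos hl]
        ring
    calc ∑' j : ℕ, φ j * P {ω | ν (m+1) ω = j}
        = ∑' (j : ℕ) (l : ℕ), (if 1 ≤ l ∧ l < j then
            P {ω | ν m ω = l} * (φ j * ENNReal.ofReal ((l:ℝ)/(((j:ℝ)-1)*j))) else 0) :=
          tsum_congr hperj
      _ = ∑' (l : ℕ) (j : ℕ), (if 1 ≤ l ∧ l < j then
            P {ω | ν m ω = l} * (φ j * ENNReal.ofReal ((l:ℝ)/(((j:ℝ)-1)*j))) else 0) :=
          ENNReal.tsum_comm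
      _ ≤ ∑' l : ℕ, C * (Stmt9.gw l * P {ω | ν m ω = l}) := by
          apply ENNReal.tsum_le_tsum
          intro l
          rcases Nat.eq_zero_or_pos l with rfl | hl
          · simp
          · have hpull : (∑' j : ℕ, (if 1 ≤ l ∧ l < j then
                P {ω | ν m ω = l} * (φ j * ENNReal.ofReal ((l:ℝ)/(((j:ℝ)-1)*j))) else 0))
                = P {ω | ν m ω = l} *
                  ∑' j : ℕ, (if l < j then φ j * ENNReal.ofReal ((l:ℝ)/(((j:ℝ)-1)*j)) else 0) := by
              rw [← ENNReal.tsum_mul_left]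
              apply tsum_congr
              intro j
              by_cases h : l < j
              · rw [if_pos ⟨hl, h⟩, if_pos h]
              · rw [if_neg (fun hc => h hc.2), if_neg h, mul_zero]
            rw [hpull]
            calc P {ω | ν m ω = l} *
                  ∑' j : ℕ, (if l < j then φ j * ENNReal.ofReal ((l:ℝ)/(((j:ℝ)-1)*j)) else 0)
                ≤ P {ω | ν m ω = l} * (C * ENNReal.ofReal (((l:ℝ)+1)⁻¹)) :=
                  mul_le_mul_right (hK l hl) _
              _ = C * (Stmt9.gw l * P {ω | ν m ω = l}) := by
                  have hl1 : 1 ≤ l := hl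
                  simp only [Stmt9.gw, if_pos hl1]
                  ring
      _ = C * ∑' l : ℕ, Stmt9.gw l * P {ω | ν m ω = l} := ENNReal.tsum_mul_left
  set q : ℝ≥0∞ := ENNReal.ofReal (1/2) with hq
  have hGq : ∀ m : ℕ, 1 ≤ m → (∑' l : ℕ, Stmt9.gw l * P {ω | ν m ω = l}) ≤ q ^ m := by
    intro m hm
    induction m with
    | zero => omega
    | succ m ih =>
      have hgwle : ∀ l : ℕ, Stmt9.gw l ≤ q := by
        intro l
        rcases Nat.eq_zero_or_pos l with rfl | hl
        · simp [Stmt9.gw]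
        · have hl1 : 1 ≤ l := hl
          simp only [Stmt9.gw, if_pos hl1, hq]
          apply ENNReal.ofReal_le_ofReal
          have h1 : (1:ℝ) ≤ (l:ℝ) := by exact_mod_cast hl
          rw [one_div]
          apply inv_anti₀ (by norm_num)
          linarith
      rcases Nat.eq_zero_or_pos m with rfl | hm'
      · calc ∑' l : ℕ, Stmt9.gw l * P {ω | ν 1 ω = l}
            ≤ ∑' l : ℕ, q * P {ω | ν 1 ω = l} :=
              ENNReal.tsum_le_tsum fun l => mul_le_mul_left (hgwle l) _
          _ = q * ∑' l : ℕ, P {ω | ν 1 ω = l} := ENNReal.tsum_mul_left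
          _ ≤ q * 1 := by
              apply mul_le_mul_right
              rw [← measure_iUnion (hpair 1) (fun l => hνset 1 l)]
              exact prob_le_one
          _ = q ^ 1 := by rw [mul_one, pow_one]
      · have hKg : ∀ l : ℕ, 1 ≤ l →
            (∑' j : ℕ, if l < j then Stmt9.gw j * ENNReal.ofReal ((l:ℝ)/(((j:ℝ)-1)*j)) else 0)
              ≤ q * ENNReal.ofReal (((l:ℝ)+1)⁻¹) := by
          intro l hl
          have hcongr : ∀ j : ℕ,
              (if l < j then Stmt9.gw j * ENNReal.ofReal ((l:ℝ)/(((j:ℝ)-1)*j)) else 0)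
              = (if l < j then
                  ENNReal.ofReal ((((j:ℝ))+1)⁻¹ * ((l:ℝ)/(((j:ℝ)-1)*j))) else 0) := by
            intro j
            by_cases h : l < j
            · rw [if_pos h, if_pos h]
              have hj1 : 1 ≤ j := by omega
              simp only [Stmt9.gw, if_pos hj1]
              rw [← ENNReal.ofReal_mul (by positivity)]
            · rw [if_neg h, if_neg h]
          rw [tsum_congr hcongr]
          exact Stmt9.K2 hl
        have h1 := hrec m hm' Stmt9.gw (by simp [Stmt9.gw]) q hKg
        rw [hEXP (m+1) Stmt9.gw] at h1
        calc ∑' l : ℕ, Stmt9.gw l * P {ω | ν (m+1) ω = l}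
            = ∑' l : ℕ, Stmt9.gw l * P {ω | ν (m+1) ω = l} := rfl
          _ ≤ q * ∑' l : ℕ, Stmt9.gw l * P {ω | ν m ω = l} := h1
          _ ≤ q * q ^ m := mul_le_mul_right (ih hm') _
          _ = q ^ (m+1) := by rw [pow_succ, mul_comm]
  obtain ⟨m, rfl⟩ : ∃ m, n = m + 1 := ⟨n - 1, by omega⟩
  have hm1 : 1 ≤ m := by omega
  have hKf : ∀ l : ℕ, 1 ≤ l →
      (∑' j : ℕ, if l < j then Stmt9.fw j * ENNReal.ofReal ((l:ℝ)/(((j:ℝ)-1)*j)) else 0)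
        ≤ ENNReal.ofReal (3/4) * ENNReal.ofReal (((l:ℝ)+1)⁻¹) := by
    intro l hl
    have hcongr : ∀ j : ℕ,
        (if l < j then Stmt9.fw j * ENNReal.ofReal ((l:ℝ)/(((j:ℝ)-1)*j)) else 0)
        = (if l < j then
            ENNReal.ofReal ((((j:ℝ)))⁻¹ * ((l:ℝ)/(((j:ℝ)-1)*j))) else 0) := by
      intro j
      by_cases h : l < j
      · rw [if_pos h, if_pos h]
        simp only [Stmt9.fw]
        rw [← ENNReal.ofReal_mul (by positivity)]
      · rw [if_neg h, if_neg h]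
    rw [tsum_congr hcongr]
    exact Stmt9.K1 hl
  have hI := hrec m hm1 Stmt9.fw (by simp [Stmt9.fw]) (ENNReal.ofReal (3/4)) hKf
  have hIbound : ∫⁻ ω, Stmt9.fw (ν (m+1) ω) ∂P ≤ ENNReal.ofReal (3/4) * q ^ m :=
    le_trans hI (mul_le_mul_right (hGq m hm1) _)
  have hae : AEMeasurable (fun ω => ((ν (m+1) ω : ℝ))⁻¹) P :=
    ((Measurable.of_discrete (f := fun k : ℕ => ((k:ℝ))⁻¹)).comp (hνmeas (m+1))).aemeasurable
  rw [integral_eq_lintegral_of_nonneg_ae (ae_of_all _ (fun ω => by positivity)) hae.aestronglyMeasurable]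
  have hlast : (∫⁻ ω, ENNReal.ofReal (((ν (m+1) ω : ℝ))⁻¹) ∂P)
      ≤ ENNReal.ofReal (3/(4*((m+1:ℕ):ℝ))) := by
    refine le_trans hIbound ?_
    rw [hq, ← ENNReal.ofReal_pow (by norm_num), ← ENNReal.ofReal_mul (by norm_num)]
    apply ENNReal.ofReal_le_ofReal
    have h2 : ((m:ℝ)+1) ≤ 2^m := by
      have := @Nat.lt_two_pow_self m
      exact_mod_cast this
    have e : (3/4:ℝ) * (1/2)^m = 3/(4*2^m) := by
      rw [div_pow, one_pow]
      ring
    rw [e]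
    push_cast
    gcongr
  exact ENNReal.toReal_le_of_le_ofReal (by positivity) hlast
end

section
/- With fₙ(z) := Lₙ(Ẽₙ(z)), where Ẽₙ is the standard tetration (n-fold iterated exponential) and Lₙ the modified iterated logarithm, the sequence (fₙ(z))_{n∈ℕ} is strictly increasing in n for each fixed z ∈ ℝ. -/
noncomputable def modL : ℕ → ℝ → ℝ
  | 0, ρ => ρ
  | n + 1, ρ => 1 + Real.log (modL n ρ)

/-- Standard tetration: n-fold iterated exponential. -/
noncomputable def stE : ℕ → ℝ → ℝ
  | 0, z => z
  | n + 1, z => Real.exp (stE n z)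

lemma modL_shift (n : ℕ) (ρ : ℝ) : modL (n + 1) ρ = modL n (1 + Real.log ρ) := by
  induction n generalizing ρ with
  | zero => simp [modL]
  | succ n ih =>
    show 1 + Real.log (modL (n + 1) ρ) = modL (n + 1) (1 + Real.log ρ)
    rw [ih ρ]; rfl

lemma modL_aux (n : ℕ) : ∀ a : ℝ, 1 < a → 1 < modL n a ∧ modL n a < modL n (1 + a) := by
  induction n with
  | zero => intro a ha; exact ⟨ha, by simp [modL]⟩
  | succ n ih =>
    intro a ha
    obtain ⟨h1, h2⟩ := ih a ha
    constructor
    · show 1 < 1 + Real.log (modL n a)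
      have := Real.log_pos h1
      linarith
    · show 1 + Real.log (modL n a) < 1 + Real.log (modL n (1 + a))
      have := Real.log_lt_log (by linarith : (0:ℝ) < modL n a) h2
      linarith

lemma stE_gt_one (z : ℝ) (n : ℕ) : 1 < stE (n + 2) z := by
  show 1 < Real.exp (stE (n + 1) z)
  have : 0 < stE (n + 1) z := Real.exp_pos _
  calc (1:ℝ) = Real.exp 0 := (Real.exp_zero).symm
    _ < _ := Real.exp_lt_exp.mpr this

theorem stmt_11 (z : ℝ) :
    StrictMono (fun n : ℕ => modL n (stE n z)) := by
  apply strictMono_nat_of_lt_succ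
  intro n
  have hkey : modL (n + 1) (stE (n + 1) z) = modL n (1 + stE n z) := by
    have : stE (n + 1) z = Real.exp (stE n z) := rfl
    rw [modL_shift, this, Real.log_exp]
  rw [hkey]
  match n with
  | 0 => show z < 1 + z; linarith
  | 1 =>
    show 1 + Real.log (Real.exp z) < 1 + Real.log (1 + Real.exp z)
    have h := Real.log_lt_log (Real.exp_pos z) (by linarith [Real.exp_pos z] :
      Real.exp z < 1 + Real.exp z)
    linarith
  | (m + 2) => exact (modL_aux (m + 2) _ (stE_gt_one z m)).2
end

section
/- The function f(z) := limₙ fₙ(z) = limₙ Lₙ(Ẽₙ(z)) exists for every z ∈ ℝ, satisfies f(z) > 1, is continuous and strictly increasing on ℝ, and satisfies the functional equation f(z) = 1 + log f(e^z) for all z ∈ ℝ. -/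
open Real Filter

noncomputable def FF (n : ℕ) (z : ℝ) : ℝ := modL n (stE n z)

lemma stE_succ_comm (n : ℕ) (z : ℝ) : stE (n + 1) z = stE n (Real.exp z) := by
  induction n generalizing z with
  | zero => rfl
  | succ n ih =>
    show Real.exp (stE (n + 1) z) = Real.exp (stE n (Real.exp z))
    rw [ih]

lemma FF_succ (n : ℕ) (z : ℝ) : FF (n + 1) z = 1 + Real.log (FF n (Real.exp z)) := by
  show 1 + Real.log (modL n (stE (n + 1) z)) = 1 + Real.log (modL n (stE n (Real.exp z)))
  rw [stE_succ_comm]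

lemma FF_zero (z : ℝ) : FF 0 z = z := rfl

lemma FF_one (z : ℝ) : FF 1 z = 1 + z := by
  show 1 + Real.log (Real.exp z) = 1 + z
  rw [Real.log_exp]

lemma FF_lb (n : ℕ) (z : ℝ) : 1 + z ≤ FF (n + 1) z := by
  induction n generalizing z with
  | zero => rw [FF_one]
  | succ n ih =>
    rw [FF_succ]
    have h1 : 1 + Real.exp z ≤ FF (n + 1) (Real.exp z) := ih (Real.exp z)
    have h2 : Real.log (Real.exp z) ≤ Real.log (FF (n + 1) (Real.exp z)) := by
      apply Real.log_le_log (Real.exp_pos z)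
      linarith [Real.exp_pos z]
    rw [Real.log_exp] at h2
    linarith

lemma FF_exp_pos (n : ℕ) (z : ℝ) : 0 < FF n (Real.exp z) := by
  cases n with
  | zero => exact Real.exp_pos z
  | succ n => have := FF_lb n (Real.exp z); linarith [Real.exp_pos z]

lemma log_four_le_two : Real.log 4 ≤ 2 := by
  rw [Real.log_le_iff_le_exp (by norm_num)]
  have h1 : (2:ℝ) ≤ Real.exp 1 := by linarith [Real.add_one_le_exp (1:ℝ)]
  have h2 : Real.exp 2 = Real.exp 1 * Real.exp 1 := by
    rw [← Real.exp_add]; norm_num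
  nlinarith [Real.exp_pos (1:ℝ)]

lemma FF_ub (n : ℕ) (z : ℝ) : FF n z ≤ 3 + max z 1 := by
  induction n generalizing z with
  | zero => rw [FF_zero]; have := le_max_left z 1; linarith
  | succ n ih =>
    rw [FF_succ]
    have hpos := FF_exp_pos n z
    have h1 : FF n (Real.exp z) ≤ 3 + max (Real.exp z) 1 := ih (Real.exp z)
    have h0 : (0:ℝ) ≤ max z 1 := le_trans zero_le_one (le_max_right z 1)
    have h3 : (1:ℝ) ≤ Real.exp (max z 1) := by
      have := Real.exp_le_exp.2 h0
      rwa [Real.exp_zero] at this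
    have h2 : max (Real.exp z) 1 ≤ Real.exp (max z 1) := by
      apply max_le
      · exact Real.exp_le_exp.2 (le_max_left z 1)
      · exact h3
    have h4 : FF n (Real.exp z) ≤ 4 * Real.exp (max z 1) := by nlinarith
    have h5 : Real.log (FF n (Real.exp z)) ≤ Real.log (4 * Real.exp (max z 1)) :=
      Real.log_le_log hpos h4
    rw [Real.log_mul (by norm_num) (Real.exp_ne_zero _), Real.log_exp] at h5
    linarith [log_four_le_two]

lemma FF_mono_n (z : ℝ) : Monotone (fun n => FF n z) := by
  apply monotone_nat_of_le_succ
  intro n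
  induction n generalizing z with
  | zero => rw [FF_zero, FF_one]; linarith
  | succ n ih =>
    rw [FF_succ, FF_succ]
    have h := Real.log_le_log (FF_exp_pos n z) (ih (Real.exp z))
    linarith

lemma FF_mono_z (n : ℕ) : Monotone (FF n) := by
  induction n with
  | zero => exact fun a b h => h
  | succ n ih =>
    intro a b hab
    rw [FF_succ, FF_succ]
    have h := Real.log_le_log (FF_exp_pos n a) (ih (Real.exp_le_exp.2 hab))
    linarith

lemma FF_lip (n : ℕ) {z w : ℝ} (h : z ≤ w) : FF (n + 1) w ≤ FF (n + 1) z + (w - z) := by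
  induction n generalizing z w with
  | zero => rw [FF_one, FF_one]; linarith
  | succ n ih =>
    rw [FF_succ (n + 1) w, FF_succ (n + 1) z]
    set a := FF (n + 1) (Real.exp z) with ha
    set b := FF (n + 1) (Real.exp w) with hb
    have haz : 1 + Real.exp z ≤ a := FF_lb n (Real.exp z)
    have hba : b ≤ a + (Real.exp w - Real.exp z) := by
      have := ih (Real.exp_le_exp.2 h)
      linarith
    have hapos : 0 < a := by linarith [Real.exp_pos z]
    have hbpos : 0 < b := by linarith [FF_lb n (Real.exp w), Real.exp_pos w]
    have h1 : (1:ℝ) ≤ Real.exp (w - z) := by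
      rw [← Real.exp_zero]; exact Real.exp_le_exp.2 (by linarith)
    have h2 : Real.exp z * Real.exp (w - z) = Real.exp w := by
      rw [← Real.exp_add]; ring_nf
    have hkey : b ≤ a * Real.exp (w - z) := by nlinarith
    have h3 : Real.log b ≤ Real.log (a * Real.exp (w - z)) := Real.log_le_log hbpos hkey
    rw [Real.log_mul (ne_of_gt hapos) (Real.exp_ne_zero _), Real.log_exp] at h3
    linarith

lemma modL_one_le (n : ℕ) {a : ℝ} (ha : 1 ≤ a) : 1 ≤ modL n a := by
  induction n with
  | zero => exact ha
  | succ n ih =>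
    show 1 ≤ 1 + Real.log (modL n a)
    linarith [Real.log_nonneg ih]

lemma modL_strictMono (n : ℕ) {a b : ℝ} (ha : 1 ≤ a) (hab : a < b) :
    modL n a < modL n b := by
  induction n with
  | zero => exact hab
  | succ n ih =>
    show 1 + Real.log (modL n a) < 1 + Real.log (modL n b)
    have := Real.log_lt_log (by linarith [modL_one_le n ha] : (0:ℝ) < modL n a) ih
    linarith

lemma stE_strictMono (n : ℕ) {z w : ℝ} (h : z < w) : stE n z < stE n w := by
  induction n with
  | zero => exact h
  | succ n ih => exact Real.exp_lt_exp.2 ih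

lemma stE_one_lt (n : ℕ) (z : ℝ) : 1 < stE (n + 2) z := by
  show 1 < Real.exp (stE (n + 1) z)
  rw [← Real.exp_zero]
  exact Real.exp_lt_exp.2 (Real.exp_pos (stE n z))

theorem stmt_13 :
    ∃ f : ℝ → ℝ,
      (∀ z : ℝ, Filter.Tendsto (fun n : ℕ => modL n (stE n z)) Filter.atTop (nhds (f z))) ∧
      (∀ z : ℝ, 1 < f z) ∧ Continuous f ∧ StrictMono f ∧
      (∀ z : ℝ, f z = 1 + Real.log (f (Real.exp z))) := by
  set f : ℝ → ℝ := fun z => ⨆ n, FF n z with hf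
  have hbdd : ∀ z : ℝ, BddAbove (Set.range fun n => FF n z) := by
    intro z
    refine ⟨3 + max z 1, ?_⟩
    rintro x ⟨n, rfl⟩
    exact FF_ub n z
  have htend : ∀ z : ℝ, Tendsto (fun n => FF n z) atTop (nhds (f z)) := fun z =>
    tendsto_atTop_ciSup (FF_mono_n z) (hbdd z)
  have hge : ∀ (n : ℕ) (z : ℝ), FF n z ≤ f z := fun n z => le_ciSup (hbdd z) n
  have hub' : ∀ z : ℝ, f z ≤ 3 + max z 1 := fun z => ciSup_le fun n => FF_ub n z
  have hlb' : ∀ z : ℝ, 1 + z ≤ f z := by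
    intro z
    have := hge 1 z
    rw [FF_one] at this
    exact this
  have hgt1 : ∀ z : ℝ, 1 < f z := by
    intro z
    have h2 : FF 2 z = 1 + Real.log (1 + Real.exp z) := by
      rw [FF_succ, FF_one]
    have hlog : 0 < Real.log (1 + Real.exp z) :=
      Real.log_pos (by linarith [Real.exp_pos z])
    have := hge 2 z
    rw [h2] at this
    linarith
  have hfpos : ∀ z : ℝ, 0 < f z := fun z => lt_trans one_pos (hgt1 z)
  -- functional equation
  have hfe : ∀ z : ℝ, f z = 1 + Real.log (f (Real.exp z)) := by
    intro z
    have hshift : Tendsto (fun n => FF (n + 1) z) atTop (nhds (f z)) :=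
      (htend z).comp (tendsto_add_atTop_nat 1)
    have hlogc : Tendsto (fun n => Real.log (FF n (Real.exp z))) atTop
        (nhds (Real.log (f (Real.exp z)))) :=
      ((Real.continuousAt_log (ne_of_gt (hfpos (Real.exp z)))).tendsto).comp
        (htend (Real.exp z))
    have h3 : Tendsto (fun n => 1 + Real.log (FF n (Real.exp z))) atTop
        (nhds (1 + Real.log (f (Real.exp z)))) := tendsto_const_nhds.add hlogc
    have heq : (fun n => FF (n + 1) z) = fun n => 1 + Real.log (FF n (Real.exp z)) := by
      funext n; exact FF_succ n z
    rw [heq] at hshift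
    exact tendsto_nhds_unique hshift h3
  -- monotone and lipschitz
  have hmono : Monotone f := by
    intro z w hzw
    exact ciSup_le fun n => (FF_mono_z n hzw).trans (hge n w)
  have hlipf : ∀ z w : ℝ, z ≤ w → f w ≤ f z + (w - z) := by
    intro z w hzw
    apply ciSup_le
    intro n
    cases n with
    | zero =>
      rw [FF_zero]
      have := hlb' z
      linarith
    | succ n =>
      have := FF_lip n hzw
      have h2 := hge (n + 1) z
      linarith
  have hcont : Continuous f := by
    have : LipschitzWith 1 f := by
      apply LipschitzWith.of_dist_le_mul
      intro a b
      rw [Real.dist_eq, Real.dist_eq, NNReal.coe_one, one_mul]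
      rcases le_total a b with h | h
      · have h1 := hlipf a b h
        have h2 := hmono h
        rw [abs_of_nonpos (by linarith), abs_of_nonpos (by linarith)]
        linarith
      · have h1 := hlipf b a h
        have h2 := hmono h
        rw [abs_of_nonneg (by linarith), abs_of_nonneg (by linarith)]
        linarith
    exact this.continuous
  -- iterated functional equation
  have hfe_iter : ∀ (n : ℕ) (x : ℝ), f x = modL n (f (stE n x)) := by
    intro n
    induction n with
    | zero => intro x; rfl
    | succ n ih =>
      intro x
      show f x = 1 + Real.log (modL n (f (stE (n + 1) x)))
      rw [stE_succ_comm, ← ih (Real.exp x)]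
      exact hfe x
  -- strict monotonicity
  have hsm : StrictMono f := by
    intro z w hzw
    set d : ℝ := stE 2 w - stE 2 z with hd
    have hdpos : 0 < d := by
      have := stE_strictMono 2 hzw
      simp only [hd]; linarith
    have hgrow : ∀ n : ℕ, (2:ℝ) ^ n * d ≤ stE (n + 2) w - stE (n + 2) z := by
      intro n
      induction n with
      | zero => simp; exact hd.le
      | succ n ih =>
        have h1 : 1 < stE (n + 2) z := stE_one_lt n z
        have h2 : stE (n + 2) z < stE (n + 2) w := stE_strictMono (n + 2) hzw
        have hexp : Real.exp (stE (n + 2) w) - Real.exp (stE (n + 2) z) ≥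
            Real.exp (stE (n + 2) z) * (stE (n + 2) w - stE (n + 2) z) := by
          have h3 := Real.add_one_le_exp (stE (n + 2) w - stE (n + 2) z)
          have h4 : Real.exp (stE (n + 2) z) *
              Real.exp (stE (n + 2) w - stE (n + 2) z) = Real.exp (stE (n + 2) w) := by
            rw [← Real.exp_add]; ring_nf
          nlinarith [Real.exp_pos (stE (n + 2) z)]
        have h5 : (2:ℝ) ≤ Real.exp (stE (n + 2) z) := by
          have := Real.add_one_le_exp (stE (n + 2) z)
          linarith
        have h6 : stE (n + 3) w - stE (n + 3) z ≥
            2 * (stE (n + 2) w - stE (n + 2) z) := by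
          show Real.exp (stE (n + 2) w) - Real.exp (stE (n + 2) z) ≥ _
          nlinarith
        have : (2:ℝ) ^ (n + 1) * d = 2 * ((2:ℝ) ^ n * d) := by ring
        nlinarith
    obtain ⟨m, hm⟩ := pow_unbounded_of_one_lt (2 / d) (one_lt_two (α := ℝ))
    have hm2 : 2 < (2:ℝ) ^ m * d := by
      rw [div_lt_iff₀ hdpos] at hm
      linarith
    set N : ℕ := m + 2 with hN
    have hdN : 2 < stE N w - stE N z := lt_of_lt_of_le hm2 (hgrow m)
    have h1 : 1 < stE N z := stE_one_lt m z
    have hA : f (stE N z) ≤ 3 + stE N z := by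
      have := hub' (stE N z)
      rw [max_eq_left (le_of_lt h1)] at this
      exact this
    have hB : 1 + stE N w ≤ f (stE N w) := hlb' (stE N w)
    have hAB : f (stE N z) < f (stE N w) := by linarith
    calc f z = modL N (f (stE N z)) := hfe_iter N z
      _ < modL N (f (stE N w)) := modL_strictMono N (le_of_lt (hgt1 _)) hAB
      _ = f w := (hfe_iter N w).symm
  exact ⟨f, htend, hgt1, hcont, hsm, hfe⟩
end

section
/- The limit function f(z) = limₙ Lₙ(Ẽₙ(z)) conjugates the modified and standard tetration dynamics: Eₙ(f(z)) = f(Ẽₙ(z)) for all n ∈ ℕ and z ∈ ℝ, where Eₙ is the modified tetration. -/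
noncomputable def modE : ℕ → ℝ → ℝ
  | 0, ρ => ρ
  | n + 1, ρ => Real.exp (modE n ρ - 1)

lemma stE_pos : ∀ (n : ℕ) {c : ℝ}, 0 < c → 0 < stE n c
  | 0, _, hc => hc
  | n + 1, _, _ => Real.exp_pos _

lemma stE_shift : ∀ (n : ℕ) (w : ℝ), stE (n + 1) w = stE n (Real.exp w)
  | 0, _ => rfl
  | n + 1, w => by
    show Real.exp (stE (n + 1) w) = Real.exp (stE n (Real.exp w))
    rw [stE_shift n w]

lemma modL_ge_one : ∀ (k : ℕ) {ρ : ℝ}, 1 ≤ ρ → 1 ≤ modL k ρ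
  | 0, _, h => h
  | k + 1, ρ, h => by
    have := Real.log_nonneg (modL_ge_one k h)
    show (1 : ℝ) ≤ 1 + Real.log (modL k ρ)
    linarith

lemma b_pos (f : ℝ → ℝ)
    (hf : ∀ z : ℝ, Filter.Tendsto (fun n : ℕ => modL n (stE n z)) Filter.atTop (nhds (f z)))
    (w : ℝ) : ∀ n : ℕ, 0 < modL n (stE n (Real.exp w)) := by
  intro n
  cases n with
  | zero => exact Real.exp_pos w
  | succ n =>
    have h1 : (1 : ℝ) ≤ stE (n + 1) (Real.exp w) := by
      show (1 : ℝ) ≤ Real.exp (stE n (Real.exp w))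
      have := (stE_pos n (Real.exp_pos w)).le
      calc (1 : ℝ) = Real.exp 0 := (Real.exp_zero).symm
        _ ≤ Real.exp (stE n (Real.exp w)) := Real.exp_le_exp.mpr this
    exact lt_of_lt_of_le one_pos (modL_ge_one _ h1)

lemma key (f : ℝ → ℝ)
    (hf : ∀ z : ℝ, Filter.Tendsto (fun n : ℕ => modL n (stE n z)) Filter.atTop (nhds (f z)))
    (w : ℝ) : f (Real.exp w) = Real.exp (f w - 1) := by
  have ha : Filter.Tendsto (fun n : ℕ => modL (n + 1) (stE (n + 1) w))
      Filter.atTop (nhds (f w)) := (hf w).comp (Filter.tendsto_add_atTop_nat 1)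
  have ha' : Filter.Tendsto (fun n : ℕ => Real.exp (modL (n + 1) (stE (n + 1) w) - 1))
      Filter.atTop (nhds (Real.exp (f w - 1))) :=
    (Real.continuous_exp.tendsto _).comp (ha.sub tendsto_const_nhds)
  have heq : ∀ n : ℕ, Real.exp (modL (n + 1) (stE (n + 1) w) - 1)
      = modL n (stE n (Real.exp w)) := by
    intro n
    have h1 : modL (n + 1) (stE (n + 1) w)
        = 1 + Real.log (modL n (stE n (Real.exp w))) := by
      show 1 + Real.log (modL n (stE (n + 1) w)) = _
      rw [stE_shift n w]
    rw [h1, add_sub_cancel_left, Real.exp_log (b_pos f hf w n)]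
  have : Filter.Tendsto (fun n : ℕ => modL n (stE n (Real.exp w)))
      Filter.atTop (nhds (Real.exp (f w - 1))) := by
    simpa only [heq] using ha'
  exact tendsto_nhds_unique (hf (Real.exp w)) this

theorem stmt_14 (f : ℝ → ℝ)
    (hf : ∀ z : ℝ, Filter.Tendsto (fun n : ℕ => modL n (stE n z)) Filter.atTop (nhds (f z))) :
    ∀ (n : ℕ) (z : ℝ), modE n (f z) = f (stE n z) := by
  intro n z
  induction n with
  | zero => rfl
  | succ n ih =>
    show Real.exp (modE n (f z) - 1) = f (Real.exp (stE n z))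
    rw [ih, key f hf (stE n z)]
end

section
/- Let (ξᵢ)_{i∈ℕ} be independent Bernoulli random variables with P(ξᵢ=1)=1/i, and K(M) = ξ₁+…+ξ_M. For any integers k ≥ 2 and z ≥ 1, the z-fold iterated composition of independent copies of K started at k satisfies P(N_k^{(z)} ≥ 2) ≤ k·2^{-z}, where N_k^{(0)} = k and N_k^{(j)} = K^{(j)}(N_k^{(j-1)}) with (K^{(j)}) independent copies of K. -/
open MeasureTheory ProbabilityTheory
open scoped ENNReal

theorem stmt_17 {Ω : Type*} [MeasurableSpace Ω]
    (P : Measure Ω) [IsProbabilityMeasure P]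
    (ξ : ℕ × ℕ → Ω → ℕ) (hmeas : ∀ ji, Measurable (ξ ji))
    (hindep : iIndepFun ξ P)
    (hval : ∀ ji ω, ξ ji ω ≤ 1)
    (hdist : ∀ j i : ℕ, 1 ≤ i → P {ω | ξ (j, i) ω = 1} = ENNReal.ofReal (1 / (i : ℝ)))
    (k : ℕ) (hk : 2 ≤ k)
    (N : ℕ → Ω → ℕ)
    (hN0 : ∀ ω, N 0 ω = k)
    (hNrec : ∀ (j : ℕ) (ω : Ω), N (j + 1) ω = ∑ i ∈ Finset.Icc 1 (N j ω), ξ (j + 1, i) ω)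
    (z : ℕ) (hz : 1 ≤ z) :
    P {ω | 2 ≤ N z ω} ≤ ENNReal.ofReal ((k : ℝ) / 2 ^ z) := by
  classical
  -- N is bounded by k
  have hb : ∀ j ω, N j ω ≤ k := by
    intro j
    induction j with
    | zero => intro ω; simp [hN0]
    | succ j ih =>
      intro ω
      rw [hNrec]
      calc ∑ i ∈ Finset.Icc 1 (N j ω), ξ (j + 1, i) ω
          ≤ ∑ i ∈ Finset.Icc 1 (N j ω), 1 :=
            Finset.sum_le_sum fun i _ => hval _ ω
        _ = N j ω := by simp
        _ ≤ k := ih ω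
  -- N is measurable
  have hNm : ∀ j, Measurable (N j) := by
    intro j
    induction j with
    | zero =>
      have : N 0 = fun _ => k := funext hN0
      rw [this]; exact measurable_const
    | succ j ih =>
      have hrepr : N (j + 1) = fun ω =>
          ∑ i ∈ Finset.Icc 1 k, if i ≤ N j ω then ξ (j + 1, i) ω else 0 := by
        funext ω
        have hfil : Finset.Icc 1 (N j ω) =
            (Finset.Icc 1 k).filter (fun i => i ≤ N j ω) := by
          ext i
          simp only [Finset.mem_Icc, Finset.mem_filter]
          have := hb j ω; omega
        rw [hNrec, hfil, Finset.sum_filter]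
      rw [hrepr]
      refine Finset.measurable_sum _ fun i _ => Measurable.ite ?_ (hmeas _) measurable_const
      exact ih measurableSet_Ici
  -- representation of N j in terms of ξ on a finite past block
  have hrep : ∀ j, ∃ g : ((Finset.Iic j ×ˢ Finset.Icc 1 k : Finset (ℕ × ℕ)) → ℕ) → ℕ,
      ∀ ω, N j ω = g (fun s => ξ s.1 ω) := by
    intro j
    induction j with
    | zero => exact ⟨fun _ => k, fun ω => hN0 ω⟩
    | succ j ih =>
      obtain ⟨g, hg⟩ := ih
      refine ⟨fun x => ∑ i ∈ Finset.Icc 1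
          (min (g (fun s => x ⟨s.1, by
            have h2 := Finset.mem_product.1 s.2
            exact Finset.mem_product.2
              ⟨Finset.mem_Iic.2 (le_trans (Finset.mem_Iic.1 h2.1) (Nat.le_succ j)), h2.2⟩⟩)) k),
          if h : (j + 1, i) ∈ (Finset.Iic (j + 1) ×ˢ Finset.Icc 1 k : Finset (ℕ × ℕ))
            then x ⟨(j + 1, i), h⟩ else 0, fun ω => ?_⟩
      have hgω : g (fun s => ξ s.1 ω) = N j ω := (hg ω).symm
      rw [hNrec]
      have hmin : min (N j ω) k = N j ω := min_eq_left (hb j ω)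
      simp only [hgω, hmin]
      refine Finset.sum_congr rfl fun i hi => ?_
      have hik : (j + 1, i) ∈ (Finset.Iic (j + 1) ×ˢ Finset.Icc 1 k : Finset (ℕ × ℕ)) := by
        simp only [Finset.mem_Icc] at hi
        simp only [Finset.mem_product, Finset.mem_Iic, Finset.mem_Icc]
        have := hb j ω; omega
      rw [dif_pos hik]
  -- independence of N j and ξ (j+1, i)
  have hind : ∀ j i, IndepFun (N j) (ξ (j + 1, i)) P := by
    intro j i
    obtain ⟨g, hg⟩ := hrep j
    have hd : Disjoint (Finset.Iic j ×ˢ Finset.Icc 1 k)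
        ({(j + 1, i)} : Finset (ℕ × ℕ)) := by
      simp only [Finset.disjoint_singleton_right, Finset.mem_product, Finset.mem_Iic,
        Finset.mem_Icc, not_and]
      omega
    have h := hindep.indepFun_finset (Finset.Iic j ×ˢ Finset.Icc 1 k) {(j + 1, i)} hd hmeas
    have hmg : Measurable g := measurable_of_countable g
    have hmem : ((j + 1, i) : ℕ × ℕ) ∈ ({(j + 1, i)} : Finset (ℕ × ℕ)) :=
      Finset.mem_singleton_self _
    have hme : Measurable
        (fun x : (({(j + 1, i)} : Finset (ℕ × ℕ)) : Type) → ℕ => x ⟨(j + 1, i), hmem⟩) := by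
      exact measurable_pi_apply _
    have h2 := h.comp hmg hme
    have e1 : (fun a => g (fun s : (Finset.Iic j ×ˢ Finset.Icc 1 k : Finset (ℕ × ℕ)) =>
        ξ s.1 a)) = N j := funext fun ω => (hg ω).symm
    exact e1 ▸ h2
  -- product formula
  have hprod : ∀ j i : ℕ, 1 ≤ i →
      P ({ω | i ≤ N j ω} ∩ {ω | ξ (j + 1, i) ω = 1}) =
        P {ω | i ≤ N j ω} * ENNReal.ofReal (1 / (i : ℝ)) := by
    intro j i hi
    have h := (hind j i).measure_inter_preimage_eq_mul (Set.Ici i) {1}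
      measurableSet_Ici (measurableSet_singleton 1)
    have e1 : N j ⁻¹' Set.Ici i = {ω | i ≤ N j ω} := rfl
    have e2 : ξ (j + 1, i) ⁻¹' {1} = {ω | ξ (j + 1, i) ω = 1} := rfl
    rw [e1, e2] at h
    rw [h, hdist (j + 1) i hi]
  -- measurability of tail sets
  have hBm : ∀ j i, MeasurableSet {ω | i ≤ N j ω} := fun j i => hNm j measurableSet_Ici
  -- integral of (N j - 1) as sum of tail probabilities
  have hre : ∀ j, ∫⁻ ω, ((N j ω - 1 : ℕ) : ℝ≥0∞) ∂P =
      ∑ i ∈ Finset.Icc 2 k, P {ω | i ≤ N j ω} := by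
    intro j
    have hpt : ∀ ω, ((N j ω - 1 : ℕ) : ℝ≥0∞) =
        ∑ i ∈ Finset.Icc 2 k, Set.indicator {ω | i ≤ N j ω} 1 ω := by
      intro ω
      have h1 : ∀ i, Set.indicator {ω | i ≤ N j ω} (1 : Ω → ℝ≥0∞) ω =
          if i ≤ N j ω then 1 else 0 := fun i => by
        by_cases h : i ≤ N j ω <;> simp [Set.indicator_apply, h]
      simp only [h1]
      have h2 : (∑ i ∈ Finset.Icc 2 k, if i ≤ N j ω then (1 : ℝ≥0∞) else 0) =
          (((Finset.Icc 2 k).filter (fun i => i ≤ N j ω)).card : ℝ≥0∞) := by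
        simp [Finset.sum_boole]
      rw [h2]
      have h3 : (Finset.Icc 2 k).filter (fun i => i ≤ N j ω) = Finset.Icc 2 (N j ω) := by
        ext i
        simp only [Finset.mem_filter, Finset.mem_Icc]
        have := hb j ω; omega
      rw [h3, Nat.card_Icc]
      norm_cast
    calc ∫⁻ ω, ((N j ω - 1 : ℕ) : ℝ≥0∞) ∂P
        = ∫⁻ ω, ∑ i ∈ Finset.Icc 2 k, Set.indicator {ω | i ≤ N j ω} 1 ω ∂P :=
          lintegral_congr hpt
      _ = ∑ i ∈ Finset.Icc 2 k, ∫⁻ ω, Set.indicator {ω | i ≤ N j ω} 1 ω ∂P :=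
          lintegral_finset_sum _ fun i _ => measurable_const.indicator (hBm j i)
      _ = ∑ i ∈ Finset.Icc 2 k, P {ω | i ≤ N j ω} :=
          Finset.sum_congr rfl fun i _ => lintegral_indicator_one (hBm j i)
  -- recursive step
  have hstep : ∀ j, ∫⁻ ω, ((N (j + 1) ω - 1 : ℕ) : ℝ≥0∞) ∂P ≤
      ENNReal.ofReal (1 / 2) * ∫⁻ ω, ((N j ω - 1 : ℕ) : ℝ≥0∞) ∂P := by
    intro j
    -- pointwise bound
    have hpt : ∀ ω, ((N (j + 1) ω - 1 : ℕ) : ℝ≥0∞) ≤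
        ∑ i ∈ Finset.Icc 2 k,
          Set.indicator ({ω | i ≤ N j ω} ∩ {ω | ξ (j + 1, i) ω = 1}) 1 ω := by
      intro ω
      have hnat : N (j + 1) ω - 1 ≤
          ∑ i ∈ Finset.Icc 2 k, (if i ≤ N j ω ∧ ξ (j + 1, i) ω = 1 then 1 else 0) := by
        have hmk : N j ω ≤ k := hb j ω
        have key : ∑ i ∈ Finset.Icc 1 (N j ω), ξ (j + 1, i) ω ≤
            1 + ∑ i ∈ Finset.Icc 2 (N j ω), ξ (j + 1, i) ω := by
          rcases Nat.eq_zero_or_pos (N j ω) with h0 | h1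
          · simp [h0]
          · have hins : Finset.Icc 1 (N j ω) = insert 1 (Finset.Icc 2 (N j ω)) := by
              ext i; simp only [Finset.mem_Icc, Finset.mem_insert]; omega
            rw [hins, Finset.sum_insert (by simp)]
            exact Nat.add_le_add_right (hval _ ω) _
        have key2 : ∑ i ∈ Finset.Icc 2 (N j ω), ξ (j + 1, i) ω ≤
            ∑ i ∈ Finset.Icc 2 k, (if i ≤ N j ω ∧ ξ (j + 1, i) ω = 1 then 1 else 0) := by
          have keq : ∀ i ∈ Finset.Icc 2 (N j ω), ξ (j + 1, i) ω =
              (if i ≤ N j ω ∧ ξ (j + 1, i) ω = 1 then 1 else 0) := by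
            intro i hi
            simp only [Finset.mem_Icc] at hi
            have h1 := hval (j + 1, i) ω
            have h2 : i ≤ N j ω := by omega
            rcases Nat.le_one_iff_eq_zero_or_eq_one.1 h1 with h | h <;> simp [h, h2]
          rw [Finset.sum_congr rfl keq]
          refine Finset.sum_le_sum_of_subset ?_
          intro i hi
          simp only [Finset.mem_Icc] at hi ⊢
          omega
        rw [hNrec]
        omega
      calc ((N (j + 1) ω - 1 : ℕ) : ℝ≥0∞)
          ≤ ((∑ i ∈ Finset.Icc 2 k,
              (if i ≤ N j ω ∧ ξ (j + 1, i) ω = 1 then 1 else 0) : ℕ) : ℝ≥0∞) :=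
            Nat.cast_le.2 hnat
        _ = ∑ i ∈ Finset.Icc 2 k,
              Set.indicator ({ω | i ≤ N j ω} ∩ {ω | ξ (j + 1, i) ω = 1}) 1 ω := by
            push_cast
            refine Finset.sum_congr rfl fun i _ => ?_
            simp only [Set.indicator_apply, Set.mem_inter_iff, Set.mem_setOf_eq]
            by_cases h : i ≤ N j ω ∧ ξ (j + 1, i) ω = 1
            · simp [h]
            · simp [h]
    have hCm : ∀ i, MeasurableSet ({ω | i ≤ N j ω} ∩ {ω | ξ (j + 1, i) ω = 1}) :=
      fun i => (hBm j i).inter (hmeas (j + 1, i) (measurableSet_singleton 1))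
    calc ∫⁻ ω, ((N (j + 1) ω - 1 : ℕ) : ℝ≥0∞) ∂P
        ≤ ∫⁻ ω, ∑ i ∈ Finset.Icc 2 k,
            Set.indicator ({ω | i ≤ N j ω} ∩ {ω | ξ (j + 1, i) ω = 1}) 1 ω ∂P :=
          lintegral_mono hpt
      _ = ∑ i ∈ Finset.Icc 2 k, ∫⁻ ω, Set.indicator
            ({ω | i ≤ N j ω} ∩ {ω | ξ (j + 1, i) ω = 1}) 1 ω ∂P :=
          lintegral_finset_sum _ fun i _ => measurable_const.indicator (hCm i)
      _ = ∑ i ∈ Finset.Icc 2 k, P ({ω | i ≤ N j ω} ∩ {ω | ξ (j + 1, i) ω = 1}) :=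
          Finset.sum_congr rfl fun i _ => lintegral_indicator_one (hCm i)
      _ = ∑ i ∈ Finset.Icc 2 k, P {ω | i ≤ N j ω} * ENNReal.ofReal (1 / (i : ℝ)) :=
          Finset.sum_congr rfl fun i hi => hprod j i (by
            simp only [Finset.mem_Icc] at hi; omega)
      _ ≤ ∑ i ∈ Finset.Icc 2 k, P {ω | i ≤ N j ω} * ENNReal.ofReal (1 / 2) := by
          refine Finset.sum_le_sum fun i hi => ?_
          simp only [Finset.mem_Icc] at hi
          refine mul_le_mul_right (ENNReal.ofReal_le_ofReal ?_) _
          have h2 : (2 : ℝ) ≤ (i : ℝ) := by exact_mod_cast hi.1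
          exact one_div_le_one_div_of_le (by norm_num) h2
      _ = ENNReal.ofReal (1 / 2) * ∑ i ∈ Finset.Icc 2 k, P {ω | i ≤ N j ω} := by
          rw [Finset.mul_sum]
          exact Finset.sum_congr rfl fun i _ => mul_comm _ _
      _ = ENNReal.ofReal (1 / 2) * ∫⁻ ω, ((N j ω - 1 : ℕ) : ℝ≥0∞) ∂P := by rw [hre j]
  -- iterate
  have hE0 : ∫⁻ ω, ((N 0 ω - 1 : ℕ) : ℝ≥0∞) ∂P = ((k - 1 : ℕ) : ℝ≥0∞) := by
    simp [hN0]
  have hiter : ∀ j, ∫⁻ ω, ((N j ω - 1 : ℕ) : ℝ≥0∞) ∂P ≤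
      ENNReal.ofReal ((1 / 2) ^ j) * ((k - 1 : ℕ) : ℝ≥0∞) := by
    intro j
    induction j with
    | zero =>
      rw [hE0, pow_zero, ENNReal.ofReal_one, one_mul]
    | succ j ih =>
      calc ∫⁻ ω, ((N (j + 1) ω - 1 : ℕ) : ℝ≥0∞) ∂P
          ≤ ENNReal.ofReal (1 / 2) * ∫⁻ ω, ((N j ω - 1 : ℕ) : ℝ≥0∞) ∂P := hstep j
        _ ≤ ENNReal.ofReal (1 / 2) * (ENNReal.ofReal ((1 / 2) ^ j) * ((k - 1 : ℕ) : ℝ≥0∞)) :=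
            mul_le_mul_right ih _
        _ = ENNReal.ofReal ((1 / 2) ^ (j + 1)) * ((k - 1 : ℕ) : ℝ≥0∞) := by
            rw [← mul_assoc, ← ENNReal.ofReal_mul (by norm_num), ← pow_succ']
  -- Markov
  have hmark : P {ω | 2 ≤ N z ω} ≤ ∫⁻ ω, ((N z ω - 1 : ℕ) : ℝ≥0∞) ∂P := by
    have hs : MeasurableSet {ω | 2 ≤ N z ω} := hNm z measurableSet_Ici
    rw [← lintegral_indicator_one hs]
    refine lintegral_mono fun ω => ?_
    by_cases h : 2 ≤ N z ω
    · rw [Set.indicator_of_mem (show ω ∈ {ω | 2 ≤ N z ω} from h)]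
      simp only [Pi.one_apply]
      have h1 : 1 ≤ N z ω - 1 := by omega
      exact_mod_cast Nat.one_le_cast.2 h1
    · rw [Set.indicator_of_notMem (show ω ∉ {ω | 2 ≤ N z ω} from h)]
      exact zero_le
  -- finish
  calc P {ω | 2 ≤ N z ω}
      ≤ ∫⁻ ω, ((N z ω - 1 : ℕ) : ℝ≥0∞) ∂P := hmark
    _ ≤ ENNReal.ofReal ((1 / 2) ^ z) * ((k - 1 : ℕ) : ℝ≥0∞) := hiter z
    _ ≤ ENNReal.ofReal ((k : ℝ) / 2 ^ z) := by
        rw [← ENNReal.ofReal_natCast (k - 1), ← ENNReal.ofReal_mul (by positivity)]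
        refine ENNReal.ofReal_le_ofReal ?_
        have h1 : ((k - 1 : ℕ) : ℝ) ≤ (k : ℝ) := by
          exact_mod_cast Nat.sub_le k 1
        have h2 : ((1 : ℝ) / 2) ^ z = 1 / 2 ^ z := by
          rw [div_pow, one_pow]
        rw [h2]
        calc 1 / (2 : ℝ) ^ z * ((k - 1 : ℕ) : ℝ) ≤ 1 / 2 ^ z * (k : ℝ) := by
              gcongr
          _ = (k : ℝ) / 2 ^ z := by ring
end
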